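/- arXiv:0910.5879 — 3 statements merged into one kernel-verified Lean document; each statement's English description precedes it below -/
import Mathlib

section
/- Chacon's biting lemma: Let Ω ⊂ ℝ^m be a measurable set of finite Lebesgue measure and let (g_k) be a sequence in L^1(Ω) with sup_k ∫_Ω |g_k| < +∞. Then there exist a subsequence (g_{k_j}) and a sequence (t_j) ⊂ [0,+∞) with t_j → +∞ such that the truncated sequence (max(−t_j, min(g_{k_j}, t_j)))_j is equi-integrable on Ω. -/
open MeasureTheory Filter

open Topology


lemma aux_frac {x e : ℝ} (hx : 0 ≤ x) (he : 0 ≤ e) : x * (e/(2*(x+1))) ≤ e/2 := by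
  rw [← mul_div_assoc, div_le_div_iff₀ (by positivity) (by norm_num)]
  nlinarith

lemma min_eq_sub' (a t : ℝ) : min a t = a - max (a - t) 0 := by
  rcases le_total a t with h | h <;> simp [min_def, max_def, h] <;> linarith

lemma clamp_abs (a t : ℝ) (ht : 0 ≤ t) : |max (-t) (min a t)| = min |a| t := by
  rcases le_total 0 a with h | h
  · rw [max_eq_right (le_min (by linarith) (by linarith)), abs_of_nonneg h,
      abs_of_nonneg (le_min h ht)]
  · rw [min_eq_left (h.trans ht), abs_of_nonpos h]
    rcases le_total (-t) a with h2 | h2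
    · rw [max_eq_right h2, abs_of_nonpos h, min_eq_left (by linarith)]
    · rw [max_eq_left h2, abs_of_nonpos (by linarith), min_eq_right (by linarith), neg_neg]

variable {α : Type*} [MeasurableSpace α] {μ : MeasureTheory.Measure α}

lemma pos_part_integrable {f : α → ℝ} {S : Set α} (hf : IntegrableOn f S μ) {c : ℝ}
    (hc : 0 ≤ c) : IntegrableOn (fun x => max (|f x| - c) 0) S μ := by
  refine Integrable.mono hf.abs
    (((hf.abs.aemeasurable.sub aemeasurable_const).max aemeasurable_const).aestronglyMeasurable)
    (Filter.Eventually.of_forall fun x => ?_)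
  have h0 : (0:ℝ) ≤ max (|f x| - c) 0 := le_max_right _ _
  rw [Real.norm_eq_abs, Real.norm_eq_abs, abs_of_nonneg h0, abs_abs]
  exact max_le (by linarith [abs_nonneg (f x)]) (abs_nonneg _)

lemma min_abs_integrable {f : α → ℝ} {S : Set α} (hf : IntegrableOn f S μ) {c : ℝ}
    (hc : 0 ≤ c) : IntegrableOn (fun x => min |f x| c) S μ := by
  refine Integrable.mono hf.abs
    ((hf.abs.aemeasurable.min aemeasurable_const).aestronglyMeasurable)
    (Filter.Eventually.of_forall fun x => ?_)
  have h0 : (0:ℝ) ≤ min |f x| c := le_min (abs_nonneg _) hc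
  rw [Real.norm_eq_abs, Real.norm_eq_abs, abs_of_nonneg h0, abs_abs]
  exact min_le_left _ _

/-- the main integral bound -/
lemma main_bound {f : α → ℝ} {Ω E : Set α} (hE : MeasurableSet E)
    (hEΩ : E ⊆ Ω) (hf : IntegrableOn f Ω μ) {s t : ℝ} (hs : 0 ≤ s) (hst : s ≤ t)
    (hEfin : μ E < ⊤) :
    ∫ x in E, min |f x| t ∂μ ≤ s * (μ E).toReal +
      ((∫ x in Ω, max (|f x| - s) 0 ∂μ) - ∫ x in Ω, max (|f x| - t) 0 ∂μ) := by
  have ht : 0 ≤ t := hs.trans hst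
  have hfE : IntegrableOn f E μ := hf.mono_set hEΩ
  have hiS : IntegrableOn (fun x => max (|f x| - s) 0) E μ := pos_part_integrable hfE hs
  have hiT : IntegrableOn (fun x => max (|f x| - t) 0) E μ := pos_part_integrable hfE ht
  have hiMs : IntegrableOn (fun x => min |f x| s) E μ := min_abs_integrable hfE hs
  have key : ∫ x in E, min |f x| t ∂μ
      = (∫ x in E, min |f x| s ∂μ) + ∫ x in E, (max (|f x| - s) 0 - max (|f x| - t) 0) ∂μ := by
    have hadd := integral_add hiMs (hiS.sub hiT)
    simp only [Pi.sub_apply] at hadd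
    rw [← hadd]
    refine integral_congr_ae (Filter.Eventually.of_forall fun x => ?_)
    have h1 := min_eq_sub' (|f x|) t
    have h2 := min_eq_sub' (|f x|) s
    simp only
    linarith
  rw [key]
  have b1 : ∫ x in E, min |f x| s ∂μ ≤ s * (μ E).toReal := by
    have := setIntegral_mono_on hiMs (integrableOn_const hEfin.ne) hE
      (fun x _ => min_le_right (|f x|) s)
    exact (by simpa [setIntegral_const, smul_eq_mul, mul_comm] using this : _ ≤ s * μ.real E)
  have b2 : ∫ x in E, (max (|f x| - s) 0 - max (|f x| - t) 0) ∂μ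
      ≤ ∫ x in Ω, (max (|f x| - s) 0 - max (|f x| - t) 0) ∂μ := by
    have hsub := (pos_part_integrable hf hs).sub (pos_part_integrable hf ht)
    refine setIntegral_mono_set hsub
      (Filter.Eventually.of_forall fun x => ?_) (HasSubset.Subset.eventuallyLE hEΩ)
    have : max (|f x| - t) 0 ≤ max (|f x| - s) 0 :=
      max_le_max (by linarith) le_rfl
    simp only [Pi.zero_apply]
    linarith
  have b3 : ∫ x in Ω, (max (|f x| - s) 0 - max (|f x| - t) 0) ∂μ
      = (∫ x in Ω, max (|f x| - s) 0 ∂μ) - ∫ x in Ω, max (|f x| - t) 0 ∂μ :=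
    integral_sub (pos_part_integrable hf hs) (pos_part_integrable hf ht)
  linarith


/-- **Chacon's biting lemma.** Let `Ω ⊆ ℝ^m` be a measurable set of finite Lebesgue
measure and `(g_k)` a sequence in `L¹(Ω)` with uniformly bounded `L¹` norms. Then there
exist a subsequence `(g_{k_j})` and levels `t_j → +∞`, `t_j ≥ 0`, such that the
truncations `max (−t_j) (min (g_{k_j}) t_j)` form an equi-integrable sequence on `Ω`. -/
theorem chacon_biting_lemma
    {m : ℕ} (Ω : Set (EuclideanSpace ℝ (Fin m))) (hΩmeas : MeasurableSet Ω)
    (hΩfin : volume Ω < ⊤)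
    (g : ℕ → EuclideanSpace ℝ (Fin m) → ℝ)
    (hint : ∀ k, IntegrableOn (g k) Ω volume)
    (hbd : ∃ C : ℝ, ∀ k, ∫ x in Ω, |g k x| ≤ C) :
    ∃ (k : ℕ → ℕ) (t : ℕ → ℝ), StrictMono k ∧ (∀ j, 0 ≤ t j) ∧
      Tendsto t atTop atTop ∧
      ∀ ε : ℝ, 0 < ε → ∃ δ : ℝ, 0 < δ ∧
        ∀ E : Set (EuclideanSpace ℝ (Fin m)), E ⊆ Ω → MeasurableSet E →
          volume E ≤ ENNReal.ofReal δ →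
          ∀ j, ∫ x in E, |max (-(t j)) (min (g (k j) x) (t j))| ≤ ε := by
  obtain ⟨C, hC⟩ := hbd
  set β : ℕ → ℕ → ℝ := fun k n => ∫ x in Ω, max (|g k x| - (n:ℝ)) 0 with hβdef
  -- β k takes values in [0, C]
  have hβmem : ∀ k, β k ∈ Set.pi Set.univ (fun _ : ℕ => Set.Icc (0:ℝ) C) := by
    intro k n _
    refine ⟨integral_nonneg fun x => le_max_right _ _, ?_⟩
    calc β k n ≤ ∫ x in Ω, |g k x| := by
          refine setIntegral_mono_on (pos_part_integrable (hint k) n.cast_nonneg)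
            (hint k).abs hΩmeas (fun x _ => max_le (by linarith [Nat.cast_nonneg (α := ℝ) n]) (abs_nonneg _))
      _ ≤ C := hC k
  -- β k is antitone in the level
  have hβanti : ∀ k, ∀ p q : ℕ, p ≤ q → β k q ≤ β k p := by
    intro k p q hpq
    refine setIntegral_mono_on (pos_part_integrable (hint k) q.cast_nonneg)
      (pos_part_integrable (hint k) p.cast_nonneg) hΩmeas (fun x _ => ?_)
    exact max_le_max (by exact_mod_cast sub_le_sub_left (by exact_mod_cast hpq) _) le_rfl
  -- compactness: extract subsequence with pointwise convergence
  have hcpt : IsCompact (Set.pi Set.univ fun _ : ℕ => Set.Icc (0:ℝ) C) :=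
    isCompact_univ_pi fun _ => isCompact_Icc
  obtain ⟨b, hbmem, φ, hφ, hφt⟩ := hcpt.tendsto_subseq hβmem
  have hbpt : ∀ n, Tendsto (fun j => β (φ j) n) atTop (𝓝 (b n)) := by
    intro n
    exact (tendsto_pi_nhds.mp hφt) n
  have hb0 : ∀ n, 0 ≤ b n := fun n => (hbmem n (Set.mem_univ n)).1
  have hbanti : Antitone b := by
    intro p q hpq
    exact le_of_tendsto_of_tendsto' (hbpt q) (hbpt p) (fun j => hβanti (φ j) p q hpq)
  set L := ⨅ n, b n with hLdef
  have hbdd : BddBelow (Set.range b) := ⟨0, by rintro y ⟨n, rfl⟩; exact hb0 n⟩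
  have hblim : Tendsto b atTop (𝓝 L) := tendsto_atTop_ciInf hbanti hbdd
  have hLle : ∀ n, L ≤ b n := fun n => ciInf_le hbdd n
  -- choose levels s j with b (s j) ≤ L + 1/(j+1)
  obtain ⟨s, hsmono, hsprop⟩ :=
    extraction_forall_of_eventually (P := fun j n => b n ≤ L + 1/((j:ℝ)+1))
      (fun j => (hblim.eventually_le_const (lt_add_of_pos_right L (by positivity))).mono fun n hn => hn)
  -- second extraction
  have hψev : ∀ j : ℕ, ∀ᶠ K in atTop, ∀ i ≤ j, |β (φ K) (s i) - b (s i)| ≤ 1/((j:ℝ)+1) := by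
    intro j
    have : ∀ i, ∀ᶠ K in atTop, |β (φ K) (s i) - b (s i)| ≤ 1/((j:ℝ)+1) := by
      intro i
      have hpos : (0:ℝ) < 1/((j:ℝ)+1) := by positivity
      obtain ⟨M, hM⟩ := Metric.tendsto_atTop.mp (hbpt (s i)) _ hpos
      filter_upwards [eventually_ge_atTop M] with K hK
      have h' := hM K hK
      rw [Real.dist_eq] at h'
      exact h'.le
    have h2 : ∀ᶠ K in atTop, ∀ i ∈ Finset.range (j+1), |β (φ K) (s i) - b (s i)| ≤ 1/((j:ℝ)+1) :=
      (Filter.eventually_all_finset _).mpr fun i _ => this i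
    filter_upwards [h2] with K hK i hij
    exact hK i (Finset.mem_range.mpr (Nat.lt_succ_of_le hij))
  obtain ⟨ψ, hψmono, hψ⟩ := extraction_forall_of_eventually hψev
  refine ⟨φ ∘ ψ, fun j => ((s j : ℕ) : ℝ), hφ.comp hψmono, fun j => Nat.cast_nonneg _, ?_, ?_⟩
  · exact tendsto_natCast_atTop_atTop.comp hsmono.tendsto_atTop
  · intro ε hε
    obtain ⟨i, hi⟩ := exists_nat_one_div_lt (show (0:ℝ) < ε/4 by linarith)
    obtain ⟨N, hN⟩ := exists_nat_one_div_lt (show (0:ℝ) < ε/8 by linarith)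
    set J := max i N with hJdef
    set δ := min (ε/(2*((s i:ℝ)+1))) (ε/(2*((s J:ℝ)+1))) with hδdef
    have hδpos : 0 < δ := lt_min (by positivity) (by positivity)
    refine ⟨δ, hδpos, ?_⟩
    intro E hEΩ hEmeas hEvol j
    have hEfin : volume E < ⊤ := hEvol.trans_lt ENNReal.ofReal_lt_top
    have hEt : (volume E).toReal ≤ δ := ENNReal.toReal_le_of_le_ofReal hδpos.le hEvol
    have hEt0 : 0 ≤ (volume E).toReal := ENNReal.toReal_nonneg
    -- rewrite the integrand
    have hrw : ∫ x in E, |max (-((s j : ℕ):ℝ)) (min (g ((φ ∘ ψ) j) x) ((s j:ℕ):ℝ))|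
        = ∫ x in E, min |g ((φ ∘ ψ) j) x| ((s j : ℕ):ℝ) :=
      integral_congr_ae (Filter.Eventually.of_forall fun x =>
        clamp_abs _ _ (Nat.cast_nonneg _))
    rw [hrw]
    rcases le_or_gt J j with hJj | hjJ
    · -- large j : use level s i
      have hij : i ≤ j := le_trans (le_max_left _ _) hJj
      have hNj : N ≤ j := le_trans (le_max_right _ _) hJj
      have hb1 := hψ j i hij
      have hb2 := hψ j j le_rfl
      rw [abs_le] at hb1 hb2
      have hmb := main_bound (μ := volume) hEmeas hEΩ (hint ((φ ∘ ψ) j))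
        (Nat.cast_nonneg (s i)) (Nat.cast_le.mpr (hsmono.le_iff_le.mpr hij)) hEfin
      have hβ1 : β (φ (ψ j)) (s i) ≤ L + 1/((i:ℝ)+1) + 1/((j:ℝ)+1) := by
        have := hsprop i
        linarith [hb1.2]
      have hβ2 : L - 1/((j:ℝ)+1) ≤ β (φ (ψ j)) (s j) := by
        have := hLle (s j)
        linarith [hb2.1]
      have hj1 : 1/((j:ℝ)+1) ≤ 1/((N:ℝ)+1) := by
        apply one_div_le_one_div_of_le (by positivity)
        exact_mod_cast Nat.succ_le_succ hNj
      have hsd : ((s i:ℕ):ℝ) * (volume E).toReal ≤ ε/2 := by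
        have hδ1 : δ ≤ ε/(2*((s i:ℝ)+1)) := min_le_left _ _
        have h1 : ((s i:ℕ):ℝ) * (volume E).toReal ≤ ((s i:ℕ):ℝ) * δ :=
          mul_le_mul_of_nonneg_left hEt (Nat.cast_nonneg _)
        have h2 : ((s i:ℕ):ℝ) * δ ≤ ((s i:ℕ):ℝ) * (ε/(2*((s i:ℝ)+1))) :=
          mul_le_mul_of_nonneg_left hδ1 (Nat.cast_nonneg _)
        have h3 : ((s i:ℕ):ℝ) * (ε/(2*((s i:ℝ)+1))) ≤ ε/2 :=
          aux_frac (Nat.cast_nonneg _) hε.le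
        linarith
      calc ∫ x in E, min |g ((φ ∘ ψ) j) x| ((s j : ℕ):ℝ)
          ≤ ((s i:ℕ):ℝ) * (volume E).toReal + (β (φ (ψ j)) (s i) - β (φ (ψ j)) (s j)) := hmb
        _ ≤ ε/2 + ((L + 1/((i:ℝ)+1) + 1/((j:ℝ)+1)) - (L - 1/((j:ℝ)+1))) := by
            have := hβ2
            linarith [hsd, hβ1]
        _ ≤ ε := by linarith [hj1, hi, hN]
    · -- small j : crude bound, level s j itself
      have hmb := main_bound (μ := volume) hEmeas hEΩ (hint ((φ ∘ ψ) j))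
        (Nat.cast_nonneg (s j)) (le_refl ((s j:ℕ):ℝ)) hEfin
      have hsj : ((s j:ℕ):ℝ) ≤ ((s J:ℕ):ℝ) := by exact_mod_cast hsmono.le_iff_le.mpr hjJ.le
      have hδ2 : δ ≤ ε/(2*((s J:ℝ)+1)) := min_le_right _ _
      have h1 : ((s j:ℕ):ℝ) * (volume E).toReal ≤ ((s J:ℕ):ℝ) * (ε/(2*((s J:ℝ)+1))) := by
        have := mul_le_mul hsj (hEt.trans hδ2) hEt0 (Nat.cast_nonneg _)
        linarith
      have h3 : ((s J:ℕ):ℝ) * (ε/(2*((s J:ℝ)+1))) ≤ ε/2 :=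
        aux_frac (Nat.cast_nonneg _) hε.le
      calc ∫ x in E, min |g ((φ ∘ ψ) j) x| ((s j : ℕ):ℝ)
          ≤ ((s j:ℕ):ℝ) * (volume E).toReal + (β (φ (ψ j)) (s j) - β (φ (ψ j)) (s j)) := hmb
        _ ≤ ε := by linarith
end

section
/- For all integers m, n ≥ 1, the convex hull of the image of the minors map equals the whole space: co( { M(A) : A ∈ ℝ^{n×m} } ) = ℝ^{τ(m,n)}. -/
/-- Index type for the `k × k` minors (1 ≤ k ≤ min m n) of an `n × m` matrix: a size
`k ∈ {1, …, min m n}` together with a set of `k` rows and a set of `k` columns. Its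
cardinality is `τ(m,n) = Σ_{k=1}^{min m n} C(m,k)·C(n,k)`, so functions from it to `ℝ`
form the space `ℝ^{τ(m,n)}`. -/
abbrev MinorIndex (m n : ℕ) : Type :=
  Σ k : Fin (min m n),
    {s : Finset (Fin n) // s.card = (k : ℕ) + 1} × {t : Finset (Fin m) // t.card = (k : ℕ) + 1}

/-- The minors map `M : ℝ^{n×m} → ℝ^{τ(m,n)}`, sending a matrix to the vector of all of
its `k × k` minors, `1 ≤ k ≤ min m n`. -/
noncomputable def minorsMap {m n : ℕ} (A : Matrix (Fin n) (Fin m) ℝ) :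
    MinorIndex m n → ℝ := fun idx =>
  (A.submatrix
      (fun i : Fin ((idx.1 : ℕ) + 1) => (idx.2.1.1.orderIsoOfFin idx.2.1.2 i : Fin n))
      (fun j : Fin ((idx.1 : ℕ) + 1) => (idx.2.2.1.orderIsoOfFin idx.2.2.2 j : Fin m))).det



lemma minorsMap_zero {m n : ℕ} : minorsMap (0 : Matrix (Fin n) (Fin m) ℝ) = 0 := by
  funext idx
  simp [minorsMap, Matrix.det_zero]

lemma det_update_entry_affine {k : ℕ} (C : Matrix (Fin k) (Fin k) ℝ)
    (i0 : Fin k) (u w : Fin k → ℝ) (t : ℝ) :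
    (C.updateRow i0 (fun j => u j + t * w j)).det
      = (C.updateRow i0 u).det + t * (C.updateRow i0 w).det := by
  have h : (fun j => u j + t * w j) = u + t • w := by
    funext j; simp [smul_eq_mul]
  rw [h, Matrix.det_updateRow_add, Matrix.det_updateRow_smul]

lemma minorsMap_update_affine {m n : ℕ} (B : Matrix (Fin n) (Fin m) ℝ) (p : Fin n) (q : Fin m)
    (idx : MinorIndex m n) :
    ∃ a b : ℝ, ∀ t : ℝ,
      minorsMap (B.updateRow p (Function.update (B p) q t)) idx = a * t + b := by
  classical
  set σ : Fin ((idx.1:ℕ)+1) → Fin n := fun i => (idx.2.1.1.orderIsoOfFin idx.2.1.2 i : Fin n) with hσdef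
  set τ : Fin ((idx.1:ℕ)+1) → Fin m := fun j => (idx.2.2.1.orderIsoOfFin idx.2.2.2 j : Fin m) with hτdef
  by_cases hp : ∃ i0, σ i0 = p
  · obtain ⟨i0, hi0⟩ := hp
    have hσinj : Function.Injective σ :=
      Subtype.coe_injective.comp (idx.2.1.1.orderIsoOfFin idx.2.1.2).injective
    set C : Matrix (Fin ((idx.1:ℕ)+1)) (Fin ((idx.1:ℕ)+1)) ℝ := B.submatrix σ τ with hC
    set u : Fin ((idx.1:ℕ)+1) → ℝ := fun j => if τ j = q then 0 else B p (τ j) with hu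
    set w : Fin ((idx.1:ℕ)+1) → ℝ := fun j => if τ j = q then 1 else 0 with hw
    refine ⟨(C.updateRow i0 w).det, (C.updateRow i0 u).det, fun t => ?_⟩
    have key : (B.updateRow p (Function.update (B p) q t)).submatrix σ τ
        = C.updateRow i0 (fun j => u j + t * w j) := by
      funext i j
      by_cases hi : i = i0
      · subst hi
        simp only [Matrix.submatrix_apply, hi0, Matrix.updateRow_self, Function.update_apply,
          Matrix.updateRow_self, hu, hw]
        by_cases hq : τ j = q <;> simp [hq]
      · have hne : σ i ≠ p := fun h => hi (hσinj (h.trans hi0.symm))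
        simp [Matrix.submatrix_apply, Matrix.updateRow_ne hne, Matrix.updateRow_ne hi, hC]
    show ((B.updateRow p (Function.update (B p) q t)).submatrix σ τ).det = _
    rw [key, det_update_entry_affine, mul_comm, add_comm]
  · refine ⟨0, (B.submatrix σ τ).det, fun t => ?_⟩
    have key : (B.updateRow p (Function.update (B p) q t)).submatrix σ τ = B.submatrix σ τ := by
      funext i j
      have hne : σ i ≠ p := fun h => hp ⟨i, h⟩
      simp [Matrix.submatrix_apply, Matrix.updateRow_ne hne]
    show ((B.updateRow p (Function.update (B p) q t)).submatrix σ τ).det = _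
    rw [key]; ring

lemma minorsMap_update_eq {m n : ℕ} (B : Matrix (Fin n) (Fin m) ℝ) (p : Fin n) (q : Fin m) :
    ∃ va vb : MinorIndex m n → ℝ, ∀ t : ℝ,
      minorsMap (B.updateRow p (Function.update (B p) q t)) = t • va + vb := by
  choose a b hab using minorsMap_update_affine B p q
  refine ⟨a, b, fun t => funext fun idx => ?_⟩
  simp [hab idx t, mul_comm]

lemma affine_bounded_above {c d u : ℝ} (h : ∀ t : ℝ, t * c + d < u) : c = 0 := by
  by_contra hc
  have := h ((u - d) / c)
  rw [div_mul_cancel₀ _ hc] at this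
  linarith

lemma apply_minorsMap_const {m n : ℕ} (f : (MinorIndex m n → ℝ) →ₗ[ℝ] ℝ) (u : ℝ)
    (hf : ∀ A : Matrix (Fin n) (Fin m) ℝ, f (minorsMap A) < u) :
    ∀ A : Matrix (Fin n) (Fin m) ℝ, f (minorsMap A) = 0 := by
  classical
  have key : ∀ (B : Matrix (Fin n) (Fin m) ℝ) (p : Fin n) (q : Fin m),
      f (minorsMap B) = f (minorsMap (B.updateRow p (Function.update (B p) q 0))) := by
    intro B p q
    obtain ⟨va, vb, h⟩ := minorsMap_update_eq B p q
    have heval : ∀ t : ℝ, f (minorsMap (B.updateRow p (Function.update (B p) q t)))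
        = t * f va + f vb := by
      intro t; rw [h t, map_add, map_smul, smul_eq_mul]
    have hslope : f va = 0 := by
      refine affine_bounded_above (c := f va) (d := f vb) (u := u) fun t => ?_
      rw [← heval t]; exact hf _
    have hB : B = B.updateRow p (Function.update (B p) q (B p q)) := by
      funext i j
      by_cases hi : i = p
      · subst hi
        by_cases hj : j = q <;> simp [Function.update_apply, hj]
      · simp [Matrix.updateRow_ne hi]
    have l1 : f (minorsMap B) = (B p q) * f va + f vb := by
      conv_lhs => rw [hB]
      exact heval (B p q)
    rw [l1, heval 0, hslope]; ring
  have zero_out : ∀ (s : Finset (Fin n × Fin m)) (B : Matrix (Fin n) (Fin m) ℝ),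
      (∀ pq : Fin n × Fin m, pq ∉ s → B pq.1 pq.2 = 0) →
      f (minorsMap B) = f (minorsMap 0) := by
    intro s
    induction s using Finset.induction_on with
    | empty =>
      intro B hB
      have : B = 0 := by funext i j; exact hB (i, j) (Finset.notMem_empty _)
      rw [this]
    | @insert a s ha ih =>
      intro B hB
      rw [key B a.1 a.2]
      apply ih
      intro pq hpq
      by_cases hpa : pq.1 = a.1
      · by_cases hqa : pq.2 = a.2
        · have : pq = a := Prod.ext hpa hqa
          subst this
          simp [Matrix.updateRow_self]
        · rw [hpa]
          simp only [Matrix.updateRow_self, Function.update_apply, if_neg hqa]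
          rw [← hpa]
          have hne : pq ≠ a := fun h => hqa (by rw [h])
          exact hB pq (by simp [Finset.mem_insert, hpq, hne])
      · rw [Matrix.updateRow_ne hpa]
        have hne : pq ≠ a := fun h => hpa (by rw [h])
        exact hB pq (by simp [Finset.mem_insert, hpq, hne])
  intro A
  rw [zero_out Finset.univ A (fun pq hpq => absurd (Finset.mem_univ pq) hpq),
    minorsMap_zero, map_zero]



lemma minorsMap_smul {m n : ℕ} (t : ℝ) (A : Matrix (Fin n) (Fin m) ℝ) (idx : MinorIndex m n) :
    minorsMap (t • A) idx = t ^ ((idx.1 : ℕ) + 1) * minorsMap A idx := by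
  unfold minorsMap
  have h : (t • A).submatrix
      (fun i : Fin ((idx.1 : ℕ) + 1) => (idx.2.1.1.orderIsoOfFin idx.2.1.2 i : Fin n))
      (fun j : Fin ((idx.1 : ℕ) + 1) => (idx.2.2.1.orderIsoOfFin idx.2.2.2 j : Fin m))
      = t • (A.submatrix _ _) := rfl
  rw [h, Matrix.det_smul]
  simp

lemma linear_eq_zero_of_vanishing {m n : ℕ}
    (f : (MinorIndex m n → ℝ) →ₗ[ℝ] ℝ)
    (hf : ∀ A : Matrix (Fin n) (Fin m) ℝ, f (minorsMap A) = 0) :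
    ∀ x, f x = 0 := by
  classical
  set c : MinorIndex m n → ℝ := fun idx => f (fun j => if idx = j then 1 else 0) with hc
  have hrep : ∀ x : MinorIndex m n → ℝ, f x = ∑ idx, x idx * c idx := by
    intro x
    simpa [smul_eq_mul] using LinearMap.pi_apply_eq_sum_univ f x
  suffices hczero : ∀ idx, c idx = 0 by
    intro x
    rw [hrep x]
    simp [hczero]
  rintro ⟨k, ⟨s, hs⟩, ⟨tt, ht⟩⟩
  set σ : Fin ((k : ℕ) + 1) → Fin n := fun a => (s.orderIsoOfFin hs a : Fin n) with hσ
  set τ : Fin ((k : ℕ) + 1) → Fin m := fun a => (tt.orderIsoOfFin ht a : Fin m) with hτ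
  have hσinj : Function.Injective σ :=
    Subtype.coe_injective.comp (s.orderIsoOfFin hs).injective
  have hτinj : Function.Injective τ :=
    Subtype.coe_injective.comp (tt.orderIsoOfFin ht).injective
  have hσmem : ∀ a, σ a ∈ s := fun a => (s.orderIsoOfFin hs a).2
  have hτmem : ∀ a, τ a ∈ tt := fun a => (tt.orderIsoOfFin ht a).2
  set Ind : Matrix (Fin n) (Fin m) ℝ :=
    fun i j => if ∃ a, σ a = i ∧ τ a = j then 1 else 0 with hInd
  set g : MinorIndex m n → ℝ := minorsMap Ind with hg
  set idx₀ : MinorIndex m n := ⟨k, ⟨s, hs⟩, ⟨tt, ht⟩⟩ with hidx₀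
  -- the minor at idx₀ is 1
  have hg1 : g idx₀ = 1 := by
    have hD : (Ind.submatrix
        (fun i : Fin ((idx₀.1 : ℕ) + 1) => (idx₀.2.1.1.orderIsoOfFin idx₀.2.1.2 i : Fin n))
        (fun j : Fin ((idx₀.1 : ℕ) + 1) => (idx₀.2.2.1.orderIsoOfFin idx₀.2.2.2 j : Fin m)))
        = (1 : Matrix (Fin ((k : ℕ) + 1)) (Fin ((k : ℕ) + 1)) ℝ) := by
      funext a b
      show Ind (σ a) (τ b) = _
      rw [Matrix.one_apply, hInd]
      simp only []
      congr 1
      apply propext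
      constructor
      · rintro ⟨a', h1, h2⟩
        have : a' = a := hσinj h1
        subst this
        exact hτinj h2
      · rintro rfl
        exact ⟨a, rfl, rfl⟩
    show (Ind.submatrix _ _).det = 1
    rw [hD, Matrix.det_one]
  -- minors of the same size at other positions vanish
  have hg0 : ∀ (s' : Finset (Fin n)) (hs' : s'.card = (k : ℕ) + 1)
      (tt' : Finset (Fin m)) (ht' : tt'.card = (k : ℕ) + 1),
      (s' ≠ s ∨ tt' ≠ tt) →
      g ⟨k, ⟨s', hs'⟩, ⟨tt', ht'⟩⟩ = 0 := by
    intro s' hs' tt' ht' hne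
    set σ' : Fin ((k : ℕ) + 1) → Fin n := fun a => (s'.orderIsoOfFin hs' a : Fin n) with hσ'
    set τ' : Fin ((k : ℕ) + 1) → Fin m := fun a => (tt'.orderIsoOfFin ht' a : Fin m) with hτ'
    show (Ind.submatrix σ' τ').det = 0
    rcases hne with hne | hne
    · -- a row outside s : zero row
      have hnsub : ¬ s' ⊆ s := fun hsub =>
        hne (Finset.eq_of_subset_of_card_le hsub (by rw [hs, hs']))
      obtain ⟨i, hi, hi'⟩ := Finset.not_subset.mp hnsub
      set a0 : Fin ((k : ℕ) + 1) := (s'.orderIsoOfFin hs').symm ⟨i, hi⟩ with ha0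
      apply Matrix.det_eq_zero_of_row_eq_zero a0
      intro b
      have hσ'a0 : σ' a0 = i := by
        show ((s'.orderIsoOfFin hs') ((s'.orderIsoOfFin hs').symm ⟨i, hi⟩) : Fin n) = i
        rw [OrderIso.apply_symm_apply]
      show Ind (σ' a0) (τ' b) = 0
      rw [hσ'a0, hInd]
      simp only [ite_eq_right_iff]
      rintro ⟨a, h1, -⟩
      exact absurd (h1 ▸ hσmem a) hi'
    · -- a column outside tt : zero column
      have hnsub : ¬ tt' ⊆ tt := fun hsub =>
        hne (Finset.eq_of_subset_of_card_le hsub (by rw [ht, ht']))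
      obtain ⟨j, hj, hj'⟩ := Finset.not_subset.mp hnsub
      set b0 : Fin ((k : ℕ) + 1) := (tt'.orderIsoOfFin ht').symm ⟨j, hj⟩ with hb0
      apply Matrix.det_eq_zero_of_column_eq_zero b0
      intro a
      have hτ'b0 : τ' b0 = j := by
        show ((tt'.orderIsoOfFin ht') ((tt'.orderIsoOfFin ht').symm ⟨j, hj⟩) : Fin m) = j
        rw [OrderIso.apply_symm_apply]
      show Ind (σ' a) (τ' b0) = 0
      rw [hτ'b0, hInd]
      simp only [ite_eq_right_iff]
      rintro ⟨a', -, h2⟩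
      exact absurd (h2 ▸ hτmem a') hj'
  -- polynomial identity
  have hpoly : ∀ t : ℝ, ∑ idx : MinorIndex m n, (t ^ ((idx.1 : ℕ) + 1) * g idx) * c idx = 0 := by
    intro t
    have := hf (t • Ind)
    rw [hrep] at this
    simpa [minorsMap_smul] using this
  set P : Polynomial ℝ :=
    ∑ idx : MinorIndex m n, Polynomial.C (g idx * c idx) * Polynomial.X ^ ((idx.1 : ℕ) + 1)
    with hPdef
  have hP : P = 0 := by
    apply Polynomial.funext
    intro t
    rw [hPdef]
    simp only [Polynomial.eval_finset_sum, Polynomial.eval_mul, Polynomial.eval_C,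
      Polynomial.eval_pow, Polynomial.eval_X, Polynomial.eval_zero]
    rw [← hpoly t]
    apply Finset.sum_congr rfl
    intro idx _
    ring
  have hcoeff : P.coeff ((k : ℕ) + 1) = 0 := by rw [hP]; simp
  rw [hPdef, Polynomial.finset_sum_coeff] at hcoeff
  have hterm : ∀ idx : MinorIndex m n,
      (Polynomial.C (g idx * c idx) * Polynomial.X ^ ((idx.1 : ℕ) + 1)).coeff ((k : ℕ) + 1)
      = if ((k : ℕ) + 1 = (idx.1 : ℕ) + 1) then g idx * c idx else 0 := by
    intro idx
    rw [Polynomial.coeff_C_mul, Polynomial.coeff_X_pow]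
    by_cases h : (k : ℕ) + 1 = (idx.1 : ℕ) + 1 <;> simp [h]
  rw [Finset.sum_congr rfl (fun idx _ => hterm idx)] at hcoeff
  have hsum : ∑ idx : MinorIndex m n,
      (if ((k : ℕ) + 1 = (idx.1 : ℕ) + 1) then g idx * c idx else 0) = c idx₀ := by
    rw [Finset.sum_eq_single idx₀]
    · rw [if_pos rfl, hg1, one_mul]
    · rintro ⟨k', pr⟩ - hne
      by_cases h1 : ((k : ℕ) + 1 = (k' : ℕ) + 1)
      · have h1' : k' = k := Fin.ext (by omega)
        subst h1'
        rw [if_pos rfl]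
        obtain ⟨⟨s', hs'⟩, ⟨tt', ht'⟩⟩ := pr
        have hne2 : s' ≠ s ∨ tt' ≠ tt := by
          by_contra hcon
          push_neg at hcon
          obtain ⟨h1, h2⟩ := hcon
          subst h1
          subst h2
          exact hne rfl
        rw [hg0 s' hs' tt' ht' hne2, zero_mul]
      · rw [if_neg h1]
    · intro h
      exact absurd (Finset.mem_univ idx₀) h
  rw [hsum] at hcoeff
  exact hcoeff

/-- The convex hull of the image of the minors map is the whole space `ℝ^{τ(m,n)}`. -/
theorem convexHull_range_minorsMap_eq_univ
    (m n : ℕ) (hm : 1 ≤ m) (hn : 1 ≤ n) :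
    convexHull ℝ (Set.range (minorsMap (m := m) (n := n))) = Set.univ := by
  classical
  set S := Set.range (minorsMap (m := m) (n := n)) with hS
  set K := convexHull ℝ S with hKdef
  have hKconv : Convex ℝ K := convex_convexHull ℝ S
  have hcl : closure K = Set.univ := by
    by_contra hne
    obtain ⟨x, hx⟩ := (Set.ne_univ_iff_exists_notMem _).mp hne
    obtain ⟨f, u, hfu, hux⟩ :=
      geometric_hahn_banach_closed_point hKconv.closure isClosed_closure hx
    have hfS : ∀ A : Matrix (Fin n) (Fin m) ℝ, f.toLinearMap (minorsMap A) < u := fun A =>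
      hfu _ (subset_closure (subset_convexHull ℝ S ⟨A, rfl⟩))
    have hzero := apply_minorsMap_const f.toLinearMap u hfS
    have hall := linear_eq_zero_of_vanishing f.toLinearMap hzero
    have h1 : f x = 0 := hall x
    have h2 : (0 : ℝ) < u := by
      have := hfS 0
      rw [hzero 0] at this
      exact this
    rw [h1] at hux
    linarith
  have hclosed : IsClosed ((affineSpan ℝ K : Set (MinorIndex m n → ℝ))) :=
    (affineSpan ℝ K).closed_of_finiteDimensional
  have huniv : (Set.univ : Set (MinorIndex m n → ℝ)) ⊆ (affineSpan ℝ K : Set _) := by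
    rw [← hcl]
    exact hclosed.closure_subset_iff.mpr (subset_affineSpan ℝ K)
  have hspan : affineSpan ℝ K = ⊤ :=
    eq_top_iff.mpr fun z _ => huniv (Set.mem_univ z)
  obtain ⟨x0, hx0⟩ := hKconv.interior_nonempty_iff_affineSpan_eq_top.mpr hspan
  apply Set.eq_univ_of_forall
  intro z
  have hy : ((2 : ℝ) • z - x0) ∈ closure K := by rw [hcl]; trivial
  have hmem : (1/2 : ℝ) • x0 + (1/2 : ℝ) • ((2 : ℝ) • z - x0) ∈ interior K :=
    hKconv.combo_interior_closure_mem_interior hx0 hy (by norm_num) (by norm_num) (by norm_num)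
  have hzeq : (1/2 : ℝ) • x0 + (1/2 : ℝ) • ((2 : ℝ) • z - x0) = z := by
    module
  rw [hzeq] at hmem
  exact interior_subset hmem
end

section
/- Existence of a symmetric subgradient: Let d ≥ 1, Q ≥ 1, let G be a subgroup of the symmetric group on {1, …, Q}, and let g : (ℝ^d)^Q → ℝ be a convex function that is G-invariant, i.e. g(X_{σ(1)}, …, X_{σ(Q)}) = g(X_1, …, X_Q) for every σ ∈ G and every X ∈ (ℝ^d)^Q. If X̄ ∈ (ℝ^d)^Q is a fixed point of the G-action, i.e. X̄_{σ(i)} = X̄_i for every σ ∈ G and every i, then there exists ζ ∈ (ℝ^d)^Q with ζ_{σ(i)} = ζ_i for every σ ∈ G and every i, such that g(Y) ≥ g(X̄) + Σ_{i=1}^Q ⟨ζ_i, Y_i − X̄_i⟩ for every Y ∈ (ℝ^d)^Q. -/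
open Set

/-- A convex function on a finite-dimensional real normed space has a continuous linear
minorant touching it at any given point. -/
theorem exists_clm_subgradient {E : Type*} [NormedAddCommGroup E] [NormedSpace ℝ E]
    [FiniteDimensional ℝ E] (g : E → ℝ) (hconv : ConvexOn ℝ Set.univ g) (x : E) :
    ∃ ℓ : E →L[ℝ] ℝ, ∀ y, g x + ℓ (y - x) ≤ g y := by
  have hcont : Continuous g := by
    rw [← continuousOn_univ]
    simpa using hconv.continuousOn_interior
  set S : Set (E × ℝ) := {p | g p.1 < p.2} with hS
  have hSconv : Convex ℝ S := by
    intro p hp q hq a b ha hb hab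
    simp only [hS, Set.mem_setOf_eq] at hp hq ⊢
    have hmain := hconv.2 (Set.mem_univ p.1) (Set.mem_univ q.1) ha hb hab
    rcases ha.lt_or_eq with ha' | ha'
    · have h1 : a * g p.1 < a * p.2 := by exact mul_lt_mul_of_pos_left hp ha'
      have h2 : b * g q.1 ≤ b * q.2 := mul_le_mul_of_nonneg_left hq.le hb
      calc g (a • p.1 + b • q.1) ≤ a * g p.1 + b * g q.1 := hmain
        _ < (a • p + b • q).2 := by simp [Prod.smul_snd]; linarith
    · have hb1 : b = 1 := by linarith
      have h2 : b * g q.1 < b * q.2 := by rw [hb1]; simpa using hq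
      calc g (a • p.1 + b • q.1) ≤ a * g p.1 + b * g q.1 := hmain
        _ < (a • p + b • q).2 := by
            simp [Prod.smul_snd]
            nlinarith
  have hSopen : IsOpen S := isOpen_lt (hcont.comp continuous_fst) continuous_snd
  have hxnot : ((x, g x) : E × ℝ) ∉ S := by simp [hS]
  obtain ⟨f, hf⟩ := geometric_hahn_banach_open_point hSconv hSopen hxnot
  set c := f ((0 : E), (1 : ℝ)) with hcdef
  have hdecomp : ∀ (y : E) (t : ℝ), f (y, t) = f (y, 0) + t * c := by
    intro y t
    have h : ((y, t) : E × ℝ) = (y, (0 : ℝ)) + t • ((0 : E), (1 : ℝ)) := by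
      simp [Prod.ext_iff]
    rw [h, map_add, map_smul, smul_eq_mul, hcdef]
  have hc : c < 0 := by
    have h := hf (x, g x + 1) (by simp [hS])
    rw [hdecomp x (g x + 1), hdecomp x (g x)] at h
    linarith
  have key : ∀ y : E, f (y, 0) + g y * c ≤ f (x, 0) + g x * c := by
    intro y
    by_contra hcon
    push_neg at hcon
    set ε := (f (y, 0) + g y * c) - (f (x, 0) + g x * c) with hε
    have hεpos : 0 < ε := by linarith
    have hne : c ≠ 0 := hc.ne
    have h := hf (y, g y + ε / (-c)) (by
      simp only [hS, Set.mem_setOf_eq]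
      have : 0 < ε / (-c) := div_pos hεpos (by linarith)
      linarith)
    rw [hdecomp y (g y + ε / (-c)), hdecomp x (g x)] at h
    have hcancel : ε / (-c) * c = -ε := by
      calc ε / (-c) * c = -(ε / (-c) * (-c)) := by ring
        _ = -ε := by rw [div_mul_cancel₀ _ (neg_ne_zero.mpr hne)]
    have hexp : (g y + ε / (-c)) * c = g y * c - ε := by
      rw [add_mul, hcancel]; ring
    rw [hexp] at h
    linarith
  refine ⟨(-(1 / c)) • (f.comp (ContinuousLinearMap.inl ℝ E ℝ)), fun y => ?_⟩
  have hk := key y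
  have hne : c ≠ 0 := hc.ne
  have hpos : 0 < -(1 / c) := by
    have : 1 / c < 0 := by exact one_div_neg.mpr hc
    linarith
  simp only [ContinuousLinearMap.smul_apply, ContinuousLinearMap.coe_comp', Function.comp_apply,
    ContinuousLinearMap.inl_apply, smul_eq_mul, map_sub]
  have h2 := mul_le_mul_of_nonneg_left hk hpos.le
  have e1 : -(1 / c) * (f (y, 0) + g y * c) = -(1 / c) * f (y, 0) - g y := by
    field_simp
    ring
  have e2 : -(1 / c) * (f (x, 0) + g x * c) = -(1 / c) * f (x, 0) - g x := by
    field_simp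
    ring
  rw [e1, e2] at h2
  linarith

/-- **Existence of a symmetric subgradient.** Let `G` be a subgroup of the symmetric
group on `{1, …, Q}` and let `g : (ℝ^d)^Q → ℝ` be convex and `G`-invariant. If `Xbar` is a
fixed point of the `G`-action, then `g` admits at `Xbar` a subgradient `ζ` which is itself
fixed by the `G`-action. -/
theorem exists_symmetric_subgradient
    {d Q : ℕ} (hd : 1 ≤ d) (hQ : 1 ≤ Q)
    (G : Subgroup (Equiv.Perm (Fin Q)))
    (g : (Fin Q → EuclideanSpace ℝ (Fin d)) → ℝ)
    (hconv : ConvexOn ℝ Set.univ g)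
    (hinv : ∀ σ ∈ G, ∀ X : Fin Q → EuclideanSpace ℝ (Fin d),
      g (fun i => X (σ i)) = g X)
    (Xbar : Fin Q → EuclideanSpace ℝ (Fin d))
    (hfix : ∀ σ ∈ G, ∀ i, Xbar (σ i) = Xbar i) :
    ∃ ζ : Fin Q → EuclideanSpace ℝ (Fin d),
      (∀ σ ∈ G, ∀ i, ζ (σ i) = ζ i) ∧
      ∀ Y : Fin Q → EuclideanSpace ℝ (Fin d),
        g Y ≥ g Xbar + ∑ i, (inner ℝ (ζ i) (Y i - Xbar i) : ℝ) := by
  classical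
  obtain ⟨ℓ, hℓ⟩ := exists_clm_subgradient g hconv Xbar
  -- Riesz representation of each coordinate functional
  set ζ₀ : Fin Q → EuclideanSpace ℝ (Fin d) := fun i =>
    (InnerProductSpace.toDual ℝ (EuclideanSpace ℝ (Fin d))).symm
      (ℓ.comp (LinearMap.toContinuousLinearMap (LinearMap.single ℝ (fun _ : Fin Q => EuclideanSpace ℝ (Fin d)) i))) with hζ₀def
  have hζ₀ : ∀ i (v : EuclideanSpace ℝ (Fin d)),
      (inner ℝ (ζ₀ i) v : ℝ) = ℓ (Pi.single i v) := by
    intro i v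
    simp [hζ₀def, InnerProductSpace.toDual_symm_apply]
  -- the base subgradient inequality, written with inner products
  have base : ∀ Y : Fin Q → EuclideanSpace ℝ (Fin d),
      g Xbar + ∑ i, (inner ℝ (ζ₀ i) (Y i - Xbar i) : ℝ) ≤ g Y := by
    intro Y
    have hsum : ∑ i, (inner ℝ (ζ₀ i) (Y i - Xbar i) : ℝ) = ℓ (Y - Xbar) := by
      rw [Finset.sum_congr rfl (fun i _ => hζ₀ i (Y i - Xbar i)), ← map_sum]
      congr 1
      have : ∀ i, (Pi.single i (Y i - Xbar i) : Fin Q → EuclideanSpace ℝ (Fin d))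
          = Pi.single i ((Y - Xbar) i) := by
        intro i; simp [Pi.sub_apply]
      rw [Finset.sum_congr rfl (fun i _ => this i), Finset.univ_sum_single]
    rw [hsum]
    exact hℓ Y
  -- each translate of ζ₀ by σ ∈ G is also a subgradient
  have hσsub : ∀ σ ∈ G, ∀ Y : Fin Q → EuclideanSpace ℝ (Fin d),
      g Xbar + ∑ i, (inner ℝ (ζ₀ (σ i)) (Y i - Xbar i) : ℝ) ≤ g Y := by
    intro σ hσ Y
    have h := base (fun j => Y (σ⁻¹ j))
    rw [hinv σ⁻¹ (inv_mem hσ) Y] at h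
    have hre : ∑ i, (inner ℝ (ζ₀ (σ i)) (Y i - Xbar i) : ℝ)
        = ∑ j, (inner ℝ (ζ₀ j) (Y (σ⁻¹ j) - Xbar j) : ℝ) := by
      refine Fintype.sum_equiv σ _ _ fun i => ?_
      simp [Equiv.Perm.inv_def, Equiv.symm_apply_apply, hfix σ hσ i]
    rw [hre]
    exact h
  -- average over G
  haveI : Fintype ↥G := Fintype.ofFinite ↥G
  set n : ℕ := Fintype.card ↥G with hn
  have hnpos : 0 < (n : ℝ) := by
    exact_mod_cast Fintype.card_pos
  refine ⟨fun i => (n : ℝ)⁻¹ • ∑ σ : G, ζ₀ ((σ : Equiv.Perm (Fin Q)) i), ?_, ?_⟩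
  · intro τ hτ i
    show (n : ℝ)⁻¹ • ∑ σ : G, ζ₀ ((σ : Equiv.Perm (Fin Q)) (τ i))
        = (n : ℝ)⁻¹ • ∑ σ : G, ζ₀ ((σ : Equiv.Perm (Fin Q)) i)
    congr 1
    refine Fintype.sum_equiv (Equiv.mulRight (⟨τ, hτ⟩ : G)) _ _ fun σ => ?_
    simp [Equiv.Perm.mul_apply]
  · intro Y
    have hswap : ∑ i, (inner ℝ ((n : ℝ)⁻¹ • ∑ σ : G, ζ₀ ((σ : Equiv.Perm (Fin Q)) i))
        (Y i - Xbar i) : ℝ)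
        = (n : ℝ)⁻¹ * ∑ σ : G, ∑ i, (inner ℝ (ζ₀ ((σ : Equiv.Perm (Fin Q)) i))
            (Y i - Xbar i) : ℝ) := by
      simp_rw [real_inner_smul_left, sum_inner, Finset.mul_sum]
      rw [Finset.sum_comm]
    rw [ge_iff_le, hswap]
    have hbound : ∑ σ : G, ∑ i, (inner ℝ (ζ₀ ((σ : Equiv.Perm (Fin Q)) i))
        (Y i - Xbar i) : ℝ) ≤ (n : ℝ) * (g Y - g Xbar) := by
      calc ∑ σ : G, ∑ i, (inner ℝ (ζ₀ ((σ : Equiv.Perm (Fin Q)) i)) (Y i - Xbar i) : ℝ)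
          ≤ ∑ _σ : G, (g Y - g Xbar) := by
            refine Finset.sum_le_sum fun σ _ => ?_
            have := hσsub (σ : Equiv.Perm (Fin Q)) σ.2 Y
            linarith
        _ = (n : ℝ) * (g Y - g Xbar) := by
            rw [Finset.sum_const, Finset.card_univ, nsmul_eq_mul, hn]
    have := mul_le_mul_of_nonneg_left hbound (inv_nonneg.mpr hnpos.le)
    rw [← mul_assoc, inv_mul_cancel₀ hnpos.ne', one_mul] at this
    linarith
end
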